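/- The product of flows is associative where defined: given flows f, g, h, the product (fg)h is defined iff f(gh) is defined, and when defined they are equal. -/

import Mathlib

/-- First-order terms over natural-number symbols: variables and applications. -/
inductive Tm : Type
  | var : ℕ → Tm
  | app : ℕ → List Tm → Tm

namespace Tm

/-- Apply a substitution (map from variables to terms) homomorphically. -/
def subst (σ : ℕ → Tm) : Tm → Tm
  | var x => σ x
  | app f ts => app f (ts.attach.map fun ⟨t, _⟩ => subst σ t)

/-- List of variables occurring in a term. -/
def varsL : Tm → List ℕ
  | var x => [x]
  | app _ ts => ts.attach.flatMap fun ⟨t, _⟩ => varsL t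

/-- Height of a term: maximal distance from the root to a subterm. -/
def height : Tm → ℕ
  | var _ => 0
  | app _ ts => (ts.attach.map fun ⟨t, _⟩ => height t + 1).foldr max 0

/-- Heights of the occurrences of the variable `x` in a term. -/
def occs (x : ℕ) : Tm → List ℕ
  | var y => if y = x then [0] else []
  | app _ ts => ts.attach.flatMap fun ⟨t, _⟩ => (occs x t).map (· + 1)

/-- Symbols occurring in a term, together with the arity they are used with. -/
def symar : Tm → List (ℕ × ℕ)
  | var _ => []
  | app f ts => (f, ts.length) :: ts.attach.flatMap fun ⟨t, _⟩ => symar t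

end Tm

open Tm

/-- Set of variables of a term. -/
def tvars (t : Tm) : Set ℕ := {x | x ∈ t.varsL}

/-- A term is closed when it has no variables. -/
def Closed (t : Tm) : Prop := t.varsL = []

/-- A substitution is finitary when it is the identity on all but finitely many variables. -/
def Finitary (σ : ℕ → Tm) : Prop := {x | σ x ≠ .var x}.Finite

/-- `σ` unifies `t` and `u`. -/
def Unifies (σ : ℕ → Tm) (t u : Tm) : Prop := subst σ t = subst σ u

/-- `θ` is a most general unifier of `t` and `u`: a (finitary) unifier such that
any other finitary unifier factors as an instance of it. -/
def IsMGU (θ : ℕ → Tm) (t u : Tm) : Prop :=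
  Finitary θ ∧ Unifies θ t u ∧
    ∀ σ, Finitary σ → Unifies σ t u → ∃ ρ, Finitary ρ ∧ ∀ x, σ x = subst ρ (θ x)

/-- Renaming of a term along a bijection of variables. -/
def rename (π : ℕ ≃ ℕ) (t : Tm) : Tm := subst (fun x => .var (π x)) t

/-- A flow is (the data of) a pair of terms `head ⊸ body`. -/
abbrev UFlow := Tm × Tm

/-- The flow condition: the variables of the head occur in the body. -/
def IsFlow (f : UFlow) : Prop := tvars f.1 ⊆ tvars f.2

/-- Equality of flows up to (simultaneous, bijective) renaming of variables. -/
def FlowEquiv (f g : UFlow) : Prop :=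
  ∃ π : ℕ ≃ ℕ, rename π f.1 = g.1 ∧ rename π f.2 = g.2

/-- Variables of a flow. -/
def flowVars (f : UFlow) : Set ℕ := tvars f.1 ∪ tvars f.2

/-- `h` is a product of the flows `f = u ⊸ v` and `g = t ⊸ w`: choosing representatives
with disjoint variables, `h = uθ ⊸ wθ` for `θ` a most general unifier of `v` and `t`. -/
def IsProd (f g h : UFlow) : Prop :=
  ∃ f' g' θ, FlowEquiv f f' ∧ FlowEquiv g g' ∧ flowVars f' ∩ flowVars g' = ∅ ∧
    IsMGU θ f'.2 g'.1 ∧ h = (subst θ f'.1, subst θ g'.2)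

/-- A wiring: a set of flows (finite sets of flows are considered up to renaming,
so we model them as sets of representatives). -/
abbrev Wiring := Set UFlow

/-- Product of wirings: pointwise product of flows, where defined. -/
def wmul (F G : Wiring) : Wiring := {h | ∃ f ∈ F, ∃ g ∈ G, IsProd f g h}

/-- The unit wiring `I = x ⊸ x`. -/
def wI : Wiring := {f | FlowEquiv (.var 0, .var 0) f}

/-- Powers of a wiring. -/
def wpow (F : Wiring) : ℕ → Wiring
  | 0 => wI
  | n + 1 => wmul F (wpow F n)

/-- Equality of wirings up to renaming of each flow. -/
def WEq (F G : Wiring) : Prop :=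
  (∀ f ∈ F, ∃ g ∈ G, FlowEquiv f g) ∧ ∀ g ∈ G, ∃ f ∈ F, FlowEquiv f g

/-- A fact: a flow of the form `t ⊸ t` with `t` closed. -/
def IsFact (f : UFlow) : Prop := Closed f.1 ∧ f.2 = f.1

/-- Application of a wiring to (the fact associated with) a closed term:
the set of product flows. -/
def appF (F : Wiring) (t : Tm) : Set UFlow := {h | ∃ f ∈ F, IsProd f (t, t) h}

/-- Application of a wiring to a fact, keeping the facts produced. -/
def factApp (F : Wiring) (t : Tm) : Set Tm := {v | ∃ f ∈ F, IsProd f (t, t) (v, v)}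

/-- A wiring is deterministic if it produces at most one fact from any fact. -/
def Deterministic (F : Wiring) : Prop := ∀ t, Closed t → (appF F t).Subsingleton

/-- Two terms are matchable if renamings of them with disjoint variables are unifiable. -/
def Matchable (t u : Tm) : Prop :=
  ∃ (π π' : ℕ ≃ ℕ), tvars (rename π t) ∩ tvars (rename π' u) = ∅ ∧
    ∃ θ, Finitary θ ∧ Unifies θ (rename π t) (rename π' u)

/-- A flow is balanced if each variable has all its occurrences at the same height. -/
def BalancedF (f : UFlow) : Prop :=
  ∀ x, ∀ n ∈ occs x f.1 ++ occs x f.2, ∀ m ∈ occs x f.1 ++ occs x f.2, n = m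

/-- Height of a flow. -/
def heightF (f : UFlow) : ℕ := max f.1.height f.2.height

/-- A wiring is balanced if all its flows are. -/
def BalancedW (F : Wiring) : Prop := ∀ f ∈ F, BalancedF f

/-- Height of a wiring: maximal height of its flows. -/
noncomputable def heightW (F : Wiring) : ℕ := sSup (heightF '' F)

/-- The computation space of a wiring `F`: closed terms (identified with the
corresponding facts) of height at most `heightW F` built using only symbols
(with their arities) occurring in `F` and the constant `⋆` (symbol `0`). -/
noncomputable def compSpace (F : Wiring) : Set Tm :=
  {t | Closed t ∧ t.height ≤ heightW F ∧
    ∀ q ∈ t.symar, q = (0, 0) ∨ ∃ f ∈ F, q ∈ f.1.symar ++ f.2.symar}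

/-- Nilpotency of a wiring: some power is the empty wiring. -/
def Nilpotent (F : Wiring) : Prop := ∃ n, 0 < n ∧ wpow F n = ∅

/-- Edges of the computation graph of `F`: from `u` to `v` iff `v ∈ F u`. -/
noncomputable def Edge (F : Wiring) (u v : Tm) : Prop :=
  u ∈ compSpace F ∧ v ∈ compSpace F ∧ v ∈ factApp F u

/-- Acyclicity of the computation graph of `F`. -/
noncomputable def AcyclicCG (F : Wiring) : Prop :=
  ¬ ∃ n, 0 < n ∧ ∃ c : ℕ → Tm, (∀ i < n, Edge F (c i) (c (i + 1))) ∧ c n = c 0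

namespace Tm

def size : Tm → ℕ
  | var _ => 1
  | app _ ts => 1 + (ts.attach.map fun ⟨t, _⟩ => size t).sum

@[elab_as_elim]
theorem ind {P : Tm → Prop} (hv : ∀ x, P (.var x))
    (ha : ∀ f ts, (∀ t ∈ ts, P t) → P (.app f ts)) : ∀ t, P t
  | .var x => hv x
  | .app f ts => ha f ts (fun t _ => ind hv ha t)

@[simp] theorem subst_var (σ : ℕ → Tm) (x : ℕ) : subst σ (var x) = σ x := by rw [subst]

@[simp] theorem subst_app (σ : ℕ → Tm) (f : ℕ) (ts : List Tm) :
    subst σ (app f ts) = app f (ts.map (subst σ)) := by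
  rw [subst]; congr 1; exact List.attach_map_val

@[simp] theorem varsL_var (x : ℕ) : varsL (var x) = [x] := by rw [varsL]

@[simp] theorem varsL_app (f : ℕ) (ts : List Tm) :
    varsL (app f ts) = ts.flatMap varsL := by
  rw [varsL]; exact congrArg List.flatten (List.attach_map_val)

@[simp] theorem size_var (x : ℕ) : size (var x) = 1 := by rw [size]

@[simp] theorem size_app (f : ℕ) (ts : List Tm) :
    size (app f ts) = 1 + (ts.map size).sum := by
  rw [size]; congr 1; exact congrArg List.sum (List.attach_map_val)

end Tm
open Tm

theorem List.map_eq_self' {α} {f : α → α} {l : List α} (h : l.map f = l) : ∀ x ∈ l, f x = x := by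
  induction l with
  | nil => simp
  | cons a l ih =>
    simp only [List.map_cons, List.cons.injEq] at h
    intro x hx
    rcases List.mem_cons.mp hx with rfl | hx
    · exact h.1
    · exact ih h.2 x hx

theorem Tm.subst_id (t : Tm) : subst Tm.var t = t := by
  induction t using Tm.ind with
  | hv x => simp
  | ha f ts ih =>
    simp only [subst_app, Tm.app.injEq, true_and]
    have : ts.map (subst Tm.var) = ts.map id := List.map_congr_left fun t ht => by
      rw [ih t ht]; rfl
    simpa using this

theorem Tm.subst_subst (σ τ : ℕ → Tm) (t : Tm) :
    subst σ (subst τ t) = subst (fun x => subst σ (τ x)) t := by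
  induction t using Tm.ind with
  | hv x => simp
  | ha f ts ih =>
    simp only [subst_app, List.map_map, Tm.app.injEq, true_and]
    exact List.map_congr_left fun t ht => ih t ht

theorem Tm.subst_congr {σ τ : ℕ → Tm} {t : Tm} (h : ∀ x ∈ t.varsL, σ x = τ x) :
    subst σ t = subst τ t := by
  induction t using Tm.ind with
  | hv x => simpa using h x (by simp)
  | ha f ts ih =>
    simp only [subst_app, Tm.app.injEq, true_and]
    refine List.map_congr_left fun t ht => ih t ht fun x hx => h x ?_
    simp only [varsL_app, List.mem_flatMap]
    exact ⟨t, ht, hx⟩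

theorem Tm.mem_varsL_subst {σ : ℕ → Tm} {t : Tm} {y : ℕ} :
    y ∈ (subst σ t).varsL ↔ ∃ x ∈ t.varsL, y ∈ (σ x).varsL := by
  induction t using Tm.ind with
  | hv x => simp
  | ha f ts ih =>
    simp only [subst_app, varsL_app, List.mem_flatMap, List.mem_map]
    constructor
    · rintro ⟨-, ⟨t, ht, rfl⟩, hy⟩
      rcases (ih t ht).1 hy with ⟨x, hx, hyx⟩
      exact ⟨x, ⟨t, ht, hx⟩, hyx⟩
    · rintro ⟨x, ⟨t, ht, hx⟩, hyx⟩
      exact ⟨subst σ t, ⟨t, ht, rfl⟩, (ih t ht).2 ⟨x, hx, hyx⟩⟩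

theorem Tm.size_pos (t : Tm) : 0 < t.size := by
  induction t using Tm.ind with
  | hv x => simp
  | ha f ts _ => simp

theorem Tm.size_subst_le {σ : ℕ → Tm} {x : ℕ} : ∀ {u : Tm}, x ∈ u.varsL →
    (σ x).size ≤ (subst σ u).size ∧ (u ≠ Tm.var x → (σ x).size < (subst σ u).size) := by
  intro u
  induction u using Tm.ind with
  | hv y =>
    simp only [varsL_var, List.mem_singleton]
    rintro rfl
    exact ⟨by simp, fun h => absurd rfl h⟩
  | ha f ts ih =>
    simp only [varsL_app, List.mem_flatMap]
    rintro ⟨t, ht, hx⟩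
    have h1 : (σ x).size ≤ (subst σ t).size := (ih t ht hx).1
    have h2 : (subst σ t).size ≤ ((ts.map (subst σ)).map Tm.size).sum := by
      refine List.single_le_sum (fun a _ => Nat.zero_le a) _ ?_
      exact List.mem_map.2 ⟨subst σ t, List.mem_map.2 ⟨t, ht, rfl⟩, rfl⟩
    have : (σ x).size < (subst σ (Tm.app f ts)).size := by
      simp only [subst_app, size_app]
      omega
    exact ⟨le_of_lt this, fun _ => this⟩

theorem Tm.occurs_check {σ : ℕ → Tm} {x : ℕ} {u : Tm}
    (h : σ x = subst σ u) (hx : x ∈ u.varsL) : u = Tm.var x := by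
  by_contra hne
  have := (Tm.size_subst_le (σ := σ) hx).2 hne
  rw [← h] at this
  omega

theorem Tm.subst_eq_self {κ : ℕ → Tm} : ∀ {s : Tm}, subst κ s = s →
    ∀ y ∈ s.varsL, κ y = Tm.var y := by
  intro s
  induction s using Tm.ind with
  | hv y => intro h z hz; simp at h hz; rwa [hz]
  | ha f ts ih =>
    intro h y hy
    simp only [subst_app, Tm.app.injEq, true_and] at h
    simp only [varsL_app, List.mem_flatMap] at hy
    rcases hy with ⟨t, ht, hyt⟩
    exact ih t ht (List.map_eq_self' h t ht) y hyt
theorem Tm.subst_rename (θ : ℕ → Tm) (π : ℕ ≃ ℕ) (t : Tm) :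
    subst θ (rename π t) = subst (fun x => θ (π x)) t := by
  rw [rename, Tm.subst_subst]
  simp only [subst_var]

theorem Tm.rename_symm (π : ℕ ≃ ℕ) (t : Tm) : rename π.symm (rename π t) = t := by
  rw [rename, Tm.subst_rename]
  simp only [Equiv.symm_apply_apply]
  exact Tm.subst_id t

theorem Tm.mem_varsL_rename {π : ℕ ≃ ℕ} {t : Tm} {y : ℕ} :
    y ∈ (rename π t).varsL ↔ ∃ x ∈ t.varsL, y = π x := by
  rw [rename]
  simp [Tm.mem_varsL_subst]

theorem Tm.rename_congr {π π' : ℕ ≃ ℕ} {t : Tm} (h : ∀ x ∈ t.varsL, π x = π' x) :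
    rename π t = rename π' t := by
  rw [rename, rename]
  exact Tm.subst_congr fun x hx => by rw [h x hx]

theorem FlowEquiv.refl (f : UFlow) : FlowEquiv f f := by
  refine ⟨Equiv.refl ℕ, ?_, ?_⟩ <;>
    · rw [rename]
      simp only [Equiv.refl_apply]
      exact Tm.subst_id _

theorem FlowEquiv.symm {f g : UFlow} (h : FlowEquiv f g) : FlowEquiv g f := by
  obtain ⟨π, h1, h2⟩ := h
  exact ⟨π.symm, by rw [← h1, Tm.rename_symm], by rw [← h2, Tm.rename_symm]⟩

theorem rename_trans (π π' : ℕ ≃ ℕ) (t : Tm) :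
    rename (π.trans π') t = rename π' (rename π t) := by
  rw [rename, rename, Tm.subst_rename]
  rfl

theorem FlowEquiv.trans {f g h : UFlow} (h1 : FlowEquiv f g) (h2 : FlowEquiv g h) :
    FlowEquiv f h := by
  obtain ⟨π, ha, hb⟩ := h1
  obtain ⟨π', hc, hd⟩ := h2
  exact ⟨π.trans π', by rw [rename_trans, ha, hc], by rw [rename_trans, hb, hd]⟩

theorem exists_perm_extend (Y : List ℕ) (φ : ℕ → ℕ)
    (hinj : ∀ x ∈ Y, ∀ y ∈ Y, φ x = φ y → x = y) :
    ∃ π : ℕ ≃ ℕ, (∀ x ∈ Y, π x = φ x) ∧ {x | π x ≠ x}.Finite := by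
  induction Y with
  | nil => exact ⟨Equiv.refl ℕ, by simp, by simp⟩
  | cons a Y ih =>
    obtain ⟨π', h1, h2⟩ := ih fun x hx y hy =>
      hinj x (List.mem_cons_of_mem a hx) y (List.mem_cons_of_mem a hy)
    by_cases ha : a ∈ Y
    · refine ⟨π', fun x hx => ?_, h2⟩
      rcases List.mem_cons.mp hx with rfl | hx
      · exact h1 x ha
      · exact h1 x hx
    · refine ⟨π'.trans (Equiv.swap (π' a) (φ a)), fun x hx => ?_, ?_⟩
      · rcases List.mem_cons.mp hx with rfl | hx
        · simp [Equiv.swap_apply_left]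
        · have hx1 : π' x = φ x := h1 x hx
          have hxa : x ≠ a := fun h => ha (h ▸ hx)
          simp only [Equiv.trans_apply, hx1]
          refine Equiv.swap_apply_of_ne_of_ne ?_ ?_
          · rw [← hx1]; exact fun h => hxa (π'.injective h)
          · exact fun h => hxa (hinj x (List.mem_cons_of_mem a hx) a List.mem_cons_self h)
      · refine Set.Finite.subset (h2.union (Set.Finite.insert (π'.symm (π' a))
          (Set.finite_singleton (π'.symm (φ a))))) fun x hx => ?_
        simp only [Set.mem_setOf_eq, Equiv.trans_apply] at hx
        simp only [Set.mem_union, Set.mem_insert_iff, Set.mem_singleton_iff]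
        by_cases hp : π' x = x
        · rw [hp] at hx
          rcases eq_or_ne x (π' a) with h | h
          · exact Or.inr (Or.inl (by rw [Equiv.eq_symm_apply, hp, h]))
          rcases eq_or_ne x (φ a) with h' | h'
          · exact Or.inr (Or.inr (by rw [Equiv.eq_symm_apply, hp, h']))
          · exact absurd (Equiv.swap_apply_of_ne_of_ne h h') hx
        · exact Or.inl hp
/-- Simultaneous unification of a list of equations. -/
def SUnifies (σ : ℕ → Tm) (E : List (Tm × Tm)) : Prop :=
  ∀ p ∈ E, subst σ p.1 = subst σ p.2

def SMGU (θ : ℕ → Tm) (E : List (Tm × Tm)) : Prop :=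
  Finitary θ ∧ SUnifies θ E ∧
    ∀ σ, Finitary σ → SUnifies σ E → ∃ ρ, Finitary ρ ∧ ∀ x, σ x = subst ρ (θ x)

def varsE (E : List (Tm × Tm)) : List ℕ := E.flatMap fun p => p.1.varsL ++ p.2.varsL

def nvE (E : List (Tm × Tm)) : ℕ := (varsE E).toFinset.card

def szE (E : List (Tm × Tm)) : ℕ := (E.map fun p => p.1.size + p.2.size).sum

def scomp (σ τ : ℕ → Tm) : ℕ → Tm := fun x => subst σ (τ x)

@[simp] theorem varsE_nil : varsE [] = [] := rfl

@[simp] theorem varsE_cons (p : Tm × Tm) (E : List (Tm × Tm)) :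
    varsE (p :: E) = p.1.varsL ++ p.2.varsL ++ varsE E := by
  simp [varsE]

@[simp] theorem szE_nil : szE [] = 0 := rfl

@[simp] theorem szE_cons (p : Tm × Tm) (E : List (Tm × Tm)) :
    szE (p :: E) = p.1.size + p.2.size + szE E := by
  simp [szE]

theorem szE_append (E F : List (Tm × Tm)) : szE (E ++ F) = szE E + szE F := by
  simp [szE]

theorem finitary_var : Finitary Tm.var := by
  simp [Finitary]

theorem Finitary.scomp {σ τ : ℕ → Tm} (hσ : Finitary σ) (hτ : Finitary τ) :
    Finitary (scomp σ τ) := by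
  refine Set.Finite.subset (hσ.union hτ) fun x hx => ?_
  simp only [Set.mem_setOf_eq] at hx
  by_cases h1 : τ x = Tm.var x
  · by_cases h2 : σ x = Tm.var x
    · exact absurd (by show subst σ (τ x) = _; rw [h1, subst_var, h2]) hx
    · exact Or.inl h2
  · exact Or.inr h1

theorem subst_scomp (σ τ : ℕ → Tm) (t : Tm) :
    subst (scomp σ τ) t = subst σ (subst τ t) := (Tm.subst_subst σ τ t).symm

theorem nvE_le_of_subset {E F : List (Tm × Tm)} (h : ∀ x ∈ varsE E, x ∈ varsE F) :
    nvE E ≤ nvE F := by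
  refine Finset.card_le_card fun x hx => ?_
  rw [List.mem_toFinset] at hx ⊢
  exact h x hx

theorem zip_sizes : ∀ (ts us : List Tm), ts.length = us.length →
    ((ts.zip us).map fun p => p.1.size + p.2.size).sum
      = (ts.map Tm.size).sum + (us.map Tm.size).sum := by
  intro ts
  induction ts with
  | nil => intro us h; simp [(List.length_eq_zero_iff.mp h.symm)]
  | cons a ts ih =>
    intro us h
    cases us with
    | nil => simp at h
    | cons b us =>
      simp only [List.zip_cons_cons, List.map_cons, List.sum_cons,
        ih us (by simpa using h)]
      omega

theorem map_subst_eq_iff {σ : ℕ → Tm} : ∀ (ts us : List Tm), ts.length = us.length →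
    (ts.map (subst σ) = us.map (subst σ) ↔ ∀ p ∈ ts.zip us, subst σ p.1 = subst σ p.2) := by
  intro ts
  induction ts with
  | nil => intro us h; simp [(List.length_eq_zero_iff.mp h.symm)]
  | cons a ts ih =>
    intro us h
    cases us with
    | nil => simp at h
    | cons b us =>
      simp only [List.map_cons, List.cons.injEq, List.zip_cons_cons, List.mem_cons]
      rw [ih us (by simpa using h)]
      constructor
      · rintro ⟨h1, h2⟩ p hp
        rcases hp with rfl | hp
        · exact h1
        · exact h2 p hp
      · intro hh
        exact ⟨hh _ (Or.inl rfl), fun p hp => hh p (Or.inr hp)⟩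

theorem varsE_zip_subset {ts us : List Tm} {y : ℕ} (hy : y ∈ varsE (ts.zip us)) :
    (∃ t ∈ ts, y ∈ t.varsL) ∨ ∃ u ∈ us, y ∈ u.varsL := by
  simp only [varsE, List.mem_flatMap, List.mem_append] at hy
  obtain ⟨p, hp, hyp⟩ := hy
  obtain ⟨h1, h2⟩ := List.of_mem_zip hp
  rcases hyp with h | h
  · exact Or.inl ⟨p.1, h1, h⟩
  · exact Or.inr ⟨p.2, h2, h⟩

theorem varsE_append (A B : List (Tm × Tm)) : varsE (A ++ B) = varsE A ++ varsE B := by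
  simp [varsE]

theorem lex_nat {a b c d : ℕ} (h1 : a ≤ c) (h2 : b < d) :
    Prod.Lex (· < ·) (· < ·) (a, b) (c, d) := by
  rcases lt_or_eq_of_le h1 with h | h
  · exact Prod.Lex.left _ _ h
  · subst h; exact Prod.Lex.right _ h2

theorem mem_varsE_cons_iff {y : ℕ} {a b : Tm} {E : List (Tm × Tm)} :
    y ∈ varsE ((a, b) :: E) ↔ y ∈ a.varsL ∨ y ∈ b.varsL ∨ y ∈ varsE E := by
  simp only [varsE_cons, List.mem_append]
  tauto
def sbind (x : ℕ) (u : Tm) : ℕ → Tm := fun y => if y = x then u else Tm.var y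

theorem finitary_sbind (x : ℕ) (u : Tm) : Finitary (sbind x u) := by
  refine Set.Finite.subset (Set.finite_singleton x) fun y hy => ?_
  simp only [Set.mem_setOf_eq, sbind] at hy
  by_contra h
  simp only [Set.mem_singleton_iff] at h
  rw [if_neg h] at hy
  exact hy rfl

theorem sbind_self (x : ℕ) (u : Tm) : sbind x u x = u := by simp [sbind]

theorem sbind_ne {x y : ℕ} (u : Tm) (h : y ≠ x) : sbind x u y = Tm.var y := by
  simp [sbind, h]

theorem subst_sbind_of_not_mem {x : ℕ} {u w : Tm} (h : x ∉ w.varsL) :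
    subst (sbind x u) w = w := by
  rw [Tm.subst_congr (τ := Tm.var) fun y hy => sbind_ne u fun hyx => h (by rwa [hyx] at hy)]
  exact Tm.subst_id w

theorem sbind_pointwise {σ : ℕ → Tm} {x : ℕ} {u : Tm} (hx : σ x = subst σ u) :
    ∀ y, subst σ (sbind x u y) = σ y := by
  intro y
  by_cases h : y = x
  · subst h; rw [sbind_self, ← hx]
  · rw [sbind_ne u h, subst_var]

theorem mem_varsL_subst_sbind {x : ℕ} {u w : Tm} {y : ℕ}
    (hy : y ∈ (subst (sbind x u) w).varsL) :
    (y ∈ w.varsL ∧ y ≠ x) ∨ y ∈ u.varsL := by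
  rcases Tm.mem_varsL_subst.1 hy with ⟨z, hz, hyz⟩
  by_cases h : z = x
  · subst h; rw [sbind_self] at hyz; exact Or.inr hyz
  · rw [sbind_ne u h, varsL_var, List.mem_singleton] at hyz
    subst hyz
    exact Or.inl ⟨hz, h⟩

theorem not_mem_varsL_subst_sbind {x : ℕ} {u w : Tm} (hocc : x ∉ u.varsL) :
    x ∉ (subst (sbind x u) w).varsL := by
  intro hx
  rcases mem_varsL_subst_sbind hx with ⟨-, h⟩ | h
  · exact h rfl
  · exact hocc h

theorem step_mgu {x : ℕ} {u : Tm} (hocc : x ∉ u.varsL) {E' : List (Tm × Tm)} {θ' : ℕ → Tm}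
    (h : SMGU θ' (E'.map fun p => (subst (sbind x u) p.1, subst (sbind x u) p.2))) :
    SMGU (scomp θ' (sbind x u)) ((Tm.var x, u) :: E') := by
  obtain ⟨hfin, huni, hfac⟩ := h
  have hbu : subst (sbind x u) u = u := subst_sbind_of_not_mem hocc
  refine ⟨hfin.scomp (finitary_sbind x u), ?_, ?_⟩
  · intro p hp
    rcases List.mem_cons.mp hp with rfl | hp
    · show subst (scomp θ' (sbind x u)) (Tm.var x) = subst (scomp θ' (sbind x u)) u
      rw [subst_var, subst_scomp, hbu]
      show subst θ' (sbind x u x) = subst θ' u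
      rw [sbind_self]
    · rw [subst_scomp, subst_scomp]
      exact huni _ (List.mem_map.2 ⟨p, hp, rfl⟩)
  · intro σ hσf hσu
    have hx : σ x = subst σ u := by
      have := hσu _ (List.mem_cons_self)
      simpa using this
    have hpt : ∀ y, subst σ (sbind x u y) = σ y := sbind_pointwise hx
    have hkey : ∀ w : Tm, subst σ (subst (sbind x u) w) = subst σ w := by
      intro w
      rw [← subst_scomp]
      exact Tm.subst_congr fun y _ => hpt y
    have hσu' : SUnifies σ (E'.map fun p => (subst (sbind x u) p.1, subst (sbind x u) p.2)) := by
      intro p hp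
      rcases List.mem_map.1 hp with ⟨q, hq, rfl⟩
      show subst σ (subst (sbind x u) q.1) = subst σ (subst (sbind x u) q.2)
      rw [hkey, hkey]
      exact hσu q (List.mem_cons_of_mem _ hq)
    obtain ⟨ρ, hρf, hρ⟩ := hfac σ hσf hσu'
    refine ⟨ρ, hρf, fun y => ?_⟩
    show σ y = subst ρ (subst θ' (sbind x u y))
    have : subst ρ (subst θ' (sbind x u y)) = subst σ (sbind x u y) := by
      rw [← subst_scomp]
      exact Tm.subst_congr fun z _ => (hρ z).symm
    rw [this, hpt y]
theorem sunifies_mapped {σ : ℕ → Tm} {x : ℕ} {u : Tm} {E' : List (Tm × Tm)}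
    (hx : σ x = subst σ u) (hσu : SUnifies σ E') :
    SUnifies σ (E'.map fun p => (subst (sbind x u) p.1, subst (sbind x u) p.2)) := by
  intro p hp
  rcases List.mem_map.1 hp with ⟨q, hq, rfl⟩
  have hkey : ∀ w : Tm, subst σ (subst (sbind x u) w) = subst σ w := by
    intro w
    rw [← subst_scomp]
    exact Tm.subst_congr fun y _ => sbind_pointwise hx y
  show subst σ (subst (sbind x u) q.1) = subst σ (subst (sbind x u) q.2)
  rw [hkey, hkey]
  exact hσu q hq

theorem varsE_mapped_subset {x : ℕ} {u : Tm} {E' : List (Tm × Tm)} {y : ℕ}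
    (hy : y ∈ varsE (E'.map fun p => (subst (sbind x u) p.1, subst (sbind x u) p.2))) :
    (y ∈ varsE E' ∧ y ≠ x) ∨ y ∈ u.varsL := by
  simp only [varsE, List.mem_flatMap, List.mem_map, List.mem_append] at hy
  obtain ⟨p, ⟨q, hq, rfl⟩, hyp⟩ := hy
  rcases hyp with h | h
  · rcases mem_varsL_subst_sbind h with ⟨h1, h2⟩ | h1
    · refine Or.inl ⟨?_, h2⟩
      simp only [varsE, List.mem_flatMap]
      exact ⟨q, hq, List.mem_append.2 (Or.inl h1)⟩
    · exact Or.inr h1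
  · rcases mem_varsL_subst_sbind h with ⟨h1, h2⟩ | h1
    · refine Or.inl ⟨?_, h2⟩
      simp only [varsE, List.mem_flatMap]
      exact ⟨q, hq, List.mem_append.2 (Or.inr h1)⟩
    · exact Or.inr h1

theorem nvE_lt_mapped {x : ℕ} {v : Tm} {E' : List (Tm × Tm)} {t u : Tm}
    (hocc : x ∉ v.varsL) (hx : x ∈ varsE ((t, u) :: E'))
    (hv : ∀ y ∈ v.varsL, y ∈ varsE ((t, u) :: E'))
    (hE' : ∀ y ∈ varsE E', y ∈ varsE ((t, u) :: E')) :
    nvE (E'.map fun p => (subst (sbind x v) p.1, subst (sbind x v) p.2)) <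
      nvE ((t, u) :: E') := by
  apply Finset.card_lt_card
  have hsub : (varsE (E'.map fun p => (subst (sbind x v) p.1, subst (sbind x v) p.2))).toFinset
      ⊆ (varsE ((t, u) :: E')).toFinset := by
    intro y hy
    rw [List.mem_toFinset] at hy ⊢
    rcases varsE_mapped_subset hy with ⟨h1, -⟩ | h1
    · exact hE' y h1
    · exact hv y h1
  rw [Finset.ssubset_iff_of_subset hsub]
  refine ⟨x, List.mem_toFinset.2 hx, fun hc => ?_⟩
  rw [List.mem_toFinset] at hc
  rcases varsE_mapped_subset hc with ⟨-, h⟩ | h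
  · exact h rfl
  · exact hocc h

theorem SMGU.swap_head {θ : ℕ → Tm} {t u : Tm} {E' : List (Tm × Tm)}
    (h : SMGU θ ((u, t) :: E')) : SMGU θ ((t, u) :: E') := by
  obtain ⟨h1, h2, h3⟩ := h
  refine ⟨h1, ?_, ?_⟩
  · intro p hp
    rcases List.mem_cons.mp hp with rfl | hp
    · exact (h2 (u, t) (List.mem_cons_self)).symm
    · exact h2 p (List.mem_cons_of_mem _ hp)
  · intro σ hσf hσu
    refine h3 σ hσf fun p hp => ?_
    rcases List.mem_cons.mp hp with rfl | hp
    · exact (hσu (t, u) (List.mem_cons_self)).symm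
    · exact hσu p (List.mem_cons_of_mem _ hp)


theorem varelim_lift {x : ℕ} {v : Tm} {E' : List (Tm × Tm)} (hocc : x ∉ v.varsL) {θ' : ℕ → Tm}
    (hs : SMGU θ' (E'.map fun p => (subst (sbind x v) p.1, subst (sbind x v) p.2)))
    (hi1 : ∀ z, θ' z ≠ Tm.var z →
      z ∈ varsE (E'.map fun p => (subst (sbind x v) p.1, subst (sbind x v) p.2)))
    (hi2 : ∀ z y, y ∈ (θ' z).varsL →
      y ∈ varsE (E'.map fun p => (subst (sbind x v) p.1, subst (sbind x v) p.2)) ∨ y = z) :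
    SMGU (scomp θ' (sbind x v)) ((Tm.var x, v) :: E') ∧
      (∀ z, scomp θ' (sbind x v) z ≠ Tm.var z → z = x ∨ z ∈ varsE E' ∨ z ∈ v.varsL) ∧
      (∀ z y, y ∈ (scomp θ' (sbind x v) z).varsL →
        (y ∈ varsE E' ∨ y ∈ v.varsL) ∨ y = z) := by
  have hmap2 : ∀ y, y ∈ varsE (E'.map fun p =>
      (subst (sbind x v) p.1, subst (sbind x v) p.2)) →
      y ∈ varsE E' ∨ y ∈ v.varsL := by
    intro y hy
    rcases varsE_mapped_subset hy with ⟨h1, -⟩ | h1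
    · exact Or.inl h1
    · exact Or.inr h1
  refine ⟨step_mgu hocc hs, ?_, ?_⟩
  · intro z hz
    by_cases hzx : z = x
    · exact Or.inl hzx
    · have : θ' z ≠ Tm.var z := by
        intro hc
        apply hz
        show subst θ' (sbind x v z) = Tm.var z
        rw [sbind_ne v hzx, subst_var, hc]
      exact Or.inr (hmap2 z (hi1 z this))
  · intro z y hy
    have hy' : y ∈ (subst θ' (sbind x v z)).varsL := hy
    by_cases hzx : z = x
    · subst hzx
      rw [sbind_self] at hy'
      rcases Tm.mem_varsL_subst.1 hy' with ⟨w, hw, hyw⟩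
      rcases hi2 w y hyw with h1 | rfl
      · exact Or.inl (hmap2 y h1)
      · exact Or.inl (Or.inr hw)
    · rw [sbind_ne v hzx, subst_var] at hy'
      rcases hi2 z y hy' with h1 | rfl
      · exact Or.inl (hmap2 y h1)
      · exact Or.inr rfl

theorem drop_lift {t : Tm} {E' : List (Tm × Tm)} {θ : ℕ → Tm}
    (hs : SMGU θ E') (hi1 : ∀ z, θ z ≠ Tm.var z → z ∈ varsE E')
    (hi2 : ∀ z y, y ∈ (θ z).varsL → y ∈ varsE E' ∨ y = z) :
    SMGU θ ((t, t) :: E') ∧ (∀ z, θ z ≠ Tm.var z → z ∈ varsE ((t, t) :: E')) ∧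
      (∀ z y, y ∈ (θ z).varsL → y ∈ varsE ((t, t) :: E') ∨ y = z) := by
  obtain ⟨hf, hu, hm⟩ := hs
  have hsub : ∀ y ∈ varsE E', y ∈ varsE ((t, t) :: E') := fun y hy =>
    mem_varsE_cons_iff.2 (Or.inr (Or.inr hy))
  refine ⟨⟨hf, ?_, ?_⟩, fun z hz => hsub z (hi1 z hz),
    fun z y hy => (hi2 z y hy).imp (hsub y) id⟩
  · intro p hp
    rcases List.mem_cons.mp hp with rfl | hp
    · rfl
    · exact hu p hp
  · intro σ' hσ'f hσ'u
    exact hm σ' hσ'f fun p hp => hσ'u p (List.mem_cons_of_mem _ hp)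

theorem exMGU : ∀ (E : List (Tm × Tm)), (∃ σ, Finitary σ ∧ SUnifies σ E) →
    ∃ θ, SMGU θ E ∧ (∀ x, θ x ≠ Tm.var x → x ∈ varsE E) ∧
      (∀ x y, y ∈ (θ x).varsL → y ∈ varsE E ∨ y = x)
  | [], _ =>
    ⟨Tm.var, ⟨finitary_var, fun p hp => by simp at hp,
      fun σ hf _ => ⟨σ, hf, fun x => by simp⟩⟩,
      fun x hx => absurd rfl hx, fun x y hy => Or.inr (by simpa using hy)⟩
  | (Tm.var x, u) :: E', hsol => by
    obtain ⟨σ, hσf, hσu⟩ := hsol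
    have hhead : σ x = subst σ u := by
      simpa using hσu _ (List.mem_cons_self)
    by_cases htu : u = Tm.var x
    · have hd1 : nvE E' ≤ nvE ((Tm.var x, u) :: E') :=
        nvE_le_of_subset fun y hy => mem_varsE_cons_iff.2 (Or.inr (Or.inr hy))
      have hd2 : szE E' < szE ((Tm.var x, u) :: E') := by
        have := Tm.size_pos u
        simp only [szE_cons, size_var]
        omega
      obtain ⟨θ, hs, hi1, hi2⟩ :=
        exMGU E' ⟨σ, hσf, fun p hp => hσu p (List.mem_cons_of_mem _ hp)⟩
      subst htu
      exact ⟨θ, drop_lift hs hi1 hi2⟩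
    · have hocc : x ∉ u.varsL := fun hmem => htu (Tm.occurs_check hhead hmem)
      have hdec : nvE (E'.map fun p => (subst (sbind x u) p.1, subst (sbind x u) p.2)) <
          nvE ((Tm.var x, u) :: E') :=
        nvE_lt_mapped hocc (mem_varsE_cons_iff.2 (Or.inl (by simp)))
          (fun y hy => mem_varsE_cons_iff.2 (Or.inr (Or.inl hy)))
          (fun y hy => mem_varsE_cons_iff.2 (Or.inr (Or.inr hy)))
      obtain ⟨θ', hs, hi1, hi2⟩ :=
        exMGU (E'.map fun p => (subst (sbind x u) p.1, subst (sbind x u) p.2))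
          ⟨σ, hσf, sunifies_mapped hhead fun p hp => hσu p (List.mem_cons_of_mem _ hp)⟩
      obtain ⟨H1, H2, H3⟩ := varelim_lift hocc hs hi1 hi2
      refine ⟨scomp θ' (sbind x u), H1, fun z hz => ?_, fun z y hy => ?_⟩
      · rw [mem_varsE_cons_iff]
        rcases H2 z hz with rfl | hz | hz
        · simp
        · tauto
        · tauto
      · rcases H3 z y hy with (hz | hz) | rfl
        · exact Or.inl (mem_varsE_cons_iff.2 (by tauto))
        · exact Or.inl (mem_varsE_cons_iff.2 (by tauto))
        · exact Or.inr rfl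
  | (Tm.app f ts, Tm.var x) :: E', hsol => by
    obtain ⟨σ, hσf, hσu⟩ := hsol
    have hhead : σ x = subst σ (Tm.app f ts) := by
      have := hσu _ (List.mem_cons_self)
      simpa using this.symm
    have hocc : x ∉ (Tm.app f ts).varsL := fun hmem =>
      absurd (Tm.occurs_check hhead hmem) (by simp)
    have hdec : nvE (E'.map fun p =>
        (subst (sbind x (Tm.app f ts)) p.1, subst (sbind x (Tm.app f ts)) p.2)) <
        nvE ((Tm.app f ts, Tm.var x) :: E') :=
      nvE_lt_mapped hocc (mem_varsE_cons_iff.2 (Or.inr (Or.inl (by simp))))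
        (fun y hy => mem_varsE_cons_iff.2 (Or.inl hy))
        (fun y hy => mem_varsE_cons_iff.2 (Or.inr (Or.inr hy)))
    obtain ⟨θ', hs, hi1, hi2⟩ :=
      exMGU (E'.map fun p =>
          (subst (sbind x (Tm.app f ts)) p.1, subst (sbind x (Tm.app f ts)) p.2))
        ⟨σ, hσf, sunifies_mapped hhead fun p hp => hσu p (List.mem_cons_of_mem _ hp)⟩
    obtain ⟨H1, H2, H3⟩ := varelim_lift hocc hs hi1 hi2
    refine ⟨scomp θ' (sbind x (Tm.app f ts)), H1.swap_head, fun z hz => ?_,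
      fun z y hy => ?_⟩
    · rw [mem_varsE_cons_iff]
      rcases H2 z hz with rfl | hz | hz
      · simp
      · tauto
      · tauto
    · rcases H3 z y hy with (hz | hz) | rfl
      · exact Or.inl (mem_varsE_cons_iff.2 (by tauto))
      · exact Or.inl (mem_varsE_cons_iff.2 (by tauto))
      · exact Or.inr rfl
  | (Tm.app f ts, Tm.app g us) :: E', hsol => by
    obtain ⟨σ, hσf, hσu⟩ := hsol
    have hhead : subst σ (Tm.app f ts) = subst σ (Tm.app g us) :=
      hσu _ (List.mem_cons_self)
    rw [subst_app, subst_app] at hhead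
    injection hhead with hfg hmap
    have hlen : ts.length = us.length := by
      have := congrArg List.length hmap
      simpa using this
    have hzip : ∀ p ∈ ts.zip us, subst σ p.1 = subst σ p.2 :=
      (map_subst_eq_iff ts us hlen).1 hmap
    have hsub : ∀ y ∈ varsE (ts.zip us ++ E'),
        y ∈ varsE ((Tm.app f ts, Tm.app g us) :: E') := by
      intro y hy
      rw [varsE_append, List.mem_append] at hy
      rw [mem_varsE_cons_iff]
      rcases hy with hy | hy
      · rcases varsE_zip_subset hy with ⟨w, hw, hyw⟩ | ⟨w, hw, hyw⟩
        · exact Or.inl (by rw [varsL_app, List.mem_flatMap]; exact ⟨w, hw, hyw⟩)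
        · exact Or.inr (Or.inl (by rw [varsL_app, List.mem_flatMap]; exact ⟨w, hw, hyw⟩))
      · tauto
    have hd1 : nvE (ts.zip us ++ E') ≤ nvE ((Tm.app f ts, Tm.app g us) :: E') :=
      nvE_le_of_subset hsub
    have hd2 : szE (ts.zip us ++ E') < szE ((Tm.app f ts, Tm.app g us) :: E') := by
      rw [szE_append, szE_cons]
      have : szE (ts.zip us) = (ts.map Tm.size).sum + (us.map Tm.size).sum :=
        zip_sizes ts us hlen
      rw [this]
      simp only [size_app]
      omega
    obtain ⟨θ, ⟨hf', hu', hm'⟩, hi1, hi2⟩ := exMGU (ts.zip us ++ E')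
      ⟨σ, hσf, fun p hp => by
        rcases List.mem_append.1 hp with h | h
        · exact hzip p h
        · exact hσu p (List.mem_cons_of_mem _ h)⟩
    subst hfg
    refine ⟨θ, ⟨hf', ?_, ?_⟩, fun z hz => hsub z (hi1 z hz),
      fun z y hy => (hi2 z y hy).imp (hsub y) id⟩
    · intro p hp
      rcases List.mem_cons.mp hp with rfl | hp
      · show subst θ (Tm.app f ts) = subst θ (Tm.app f us)
        rw [subst_app, subst_app]
        exact congrArg _ ((map_subst_eq_iff ts us hlen).2
          fun p hp => hu' p (List.mem_append.2 (Or.inl hp)))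
      · exact hu' p (List.mem_append.2 (Or.inr hp))
    · intro σ' hf'' hu''
      refine hm' σ' hf'' fun p hp => ?_
      rcases List.mem_append.1 hp with hp | hp
      · have hh := hu'' _ (List.mem_cons_self)
        rw [subst_app, subst_app] at hh
        injection hh with _ hmm
        exact (map_subst_eq_iff ts us hlen).1 hmm p hp
      · exact hu'' p (List.mem_cons_of_mem _ hp)
termination_by E _ => (nvE E, szE E)
decreasing_by
  · exact lex_nat hd1 hd2
  · exact Prod.Lex.left _ _ hdec
  · exact Prod.Lex.left _ _ hdec
  · exact lex_nat hd1 hd2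
theorem isMGU_iff {θ : ℕ → Tm} {t u : Tm} : IsMGU θ t u ↔ SMGU θ [(t, u)] := by
  constructor
  · rintro ⟨h1, h2, h3⟩
    refine ⟨h1, fun p hp => ?_, fun σ hf hu => h3 σ hf (hu (t, u) (List.mem_singleton_self _))⟩
    rcases List.mem_singleton.mp hp with rfl
    exact h2
  · rintro ⟨h1, h2, h3⟩
    exact ⟨h1, h2 (t, u) (List.mem_singleton_self _),
      fun σ hf hu => h3 σ hf fun p hp => by rcases List.mem_singleton.mp hp with rfl; exact hu⟩

theorem smgu_flowEquiv {E : List (Tm × Tm)} {θ θ' : ℕ → Tm}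
    (h : SMGU θ E) (h' : SMGU θ' E) (a b : Tm) :
    FlowEquiv (subst θ a, subst θ b) (subst θ' a, subst θ' b) := by
  obtain ⟨hf, hu, hm⟩ := h
  obtain ⟨hf', hu', hm'⟩ := h'
  obtain ⟨ρ, hρf, hρ⟩ := hm θ' hf' hu'
  obtain ⟨ρ', hρ'f, hρ'⟩ := hm' θ hf hu
  have key : ∀ x y, y ∈ (θ x).varsL → subst ρ' (ρ y) = Tm.var y := by
    intro x y hy
    have h1 : subst (scomp ρ' ρ) (θ x) = θ x := by
      rw [subst_scomp, ← hρ x, ← hρ' x]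
    exact Tm.subst_eq_self h1 y hy
  have hYkey : ∀ c : Tm, ∀ y ∈ (subst θ c).varsL, subst ρ' (ρ y) = Tm.var y := by
    intro c y hy
    rcases Tm.mem_varsL_subst.1 hy with ⟨x, -, hyx⟩
    exact key x y hyx
  set Y : List ℕ := (subst θ a).varsL ++ (subst θ b).varsL with hYdef
  have hYk : ∀ y ∈ Y, subst ρ' (ρ y) = Tm.var y := by
    intro y hy
    rcases List.mem_append.1 hy with hy | hy
    · exact hYkey a y hy
    · exact hYkey b y hy
  have hvar : ∀ y ∈ Y, ∃ z, ρ y = Tm.var z := by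
    intro y hy
    rcases hρy : ρ y with z | ⟨n, ws⟩
    · exact ⟨z, rfl⟩
    · exfalso
      have := hYk y hy
      rw [hρy, subst_app] at this
      exact Tm.noConfusion this
  classical
  set φ : ℕ → ℕ := fun y => if h : ∃ z, ρ y = Tm.var z then h.choose else y with hφdef
  have hφ : ∀ y ∈ Y, ρ y = Tm.var (φ y) := by
    intro y hy
    have h := hvar y hy
    simp only [hφdef, dif_pos h]
    exact h.choose_spec
  have hinj : ∀ y₁ ∈ Y, ∀ y₂ ∈ Y, φ y₁ = φ y₂ → y₁ = y₂ := by
    intro y₁ h₁ y₂ h₂ he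
    have e1 := hYk y₁ h₁
    have e2 := hYk y₂ h₂
    rw [hφ y₁ h₁] at e1
    rw [hφ y₂ h₂] at e2
    rw [he] at e1
    rw [e1] at e2
    exact (Tm.var.injEq _ _ ▸ e2 : y₁ = y₂)
  obtain ⟨π, hπ, hπfin⟩ := exists_perm_extend Y φ hinj
  have hren : ∀ c : Tm, (∀ y ∈ (subst θ c).varsL, y ∈ Y) →
      rename π (subst θ c) = subst θ' c := by
    intro c hc
    have h1 : rename π (subst θ c) = subst ρ (subst θ c) := by
      rw [rename]
      refine Tm.subst_congr fun y hy => ?_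
      have hyY : y ∈ Y := hc y hy
      rw [hπ y hyY, ← hφ y hyY]
    rw [h1, ← subst_scomp]
    exact Tm.subst_congr fun x _ => (hρ x).symm
  exact ⟨π, hren a fun y hy => List.mem_append.2 (Or.inl hy),
    hren b fun y hy => List.mem_append.2 (Or.inr hy)⟩
def fvl (f : UFlow) : List ℕ := f.1.varsL ++ f.2.varsL

theorem mem_flowVars {x : ℕ} {f : UFlow} : x ∈ flowVars f ↔ x ∈ fvl f := by
  simp [flowVars, tvars, fvl, Set.mem_union]

theorem flow_disj_iff {f g : UFlow} :
    flowVars f ∩ flowVars g = ∅ ↔ ∀ x ∈ fvl f, x ∉ fvl g := by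
  rw [Set.eq_empty_iff_forall_notMem]
  constructor
  · intro h x hx hg
    exact h x ⟨mem_flowVars.2 hx, mem_flowVars.2 hg⟩
  · rintro h x ⟨h1, h2⟩
    exact h x (mem_flowVars.1 h1) (mem_flowVars.1 h2)

theorem finitary_comp_perm {θ : ℕ → Tm} {κ : ℕ ≃ ℕ} (hθ : Finitary θ)
    (hκ : {x | κ x ≠ x}.Finite) : Finitary (fun x => θ (κ x)) := by
  refine Set.Finite.subset (hκ.union hθ) fun x hx => ?_
  simp only [Set.mem_setOf_eq, Set.mem_union] at hx ⊢
  by_cases h1 : κ x = x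
  · rw [h1] at hx
    exact Or.inr hx
  · exact Or.inl h1

theorem unifies_of_rename {κ : ℕ ≃ ℕ} {v t v' t' : Tm}
    (hv : rename κ v = v') (ht : rename κ t = t') {σ : ℕ → Tm}
    (hσ : Unifies σ v' t') : Unifies (fun x => σ (κ x)) v t := by
  show subst _ v = subst _ t
  rw [← Tm.subst_rename σ κ v, ← Tm.subst_rename σ κ t, hv, ht]
  exact hσ

theorem smgu_of_rename {κ : ℕ ≃ ℕ} (hκ : {x | κ x ≠ x}.Finite) {v t v' t' : Tm}
    (hv : rename κ v = v') (ht : rename κ t = t') {θ : ℕ → Tm}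
    (hmgu : SMGU θ [(v', t')]) : SMGU (fun x => θ (κ x)) [(v, t)] := by
  obtain ⟨hf, hu, hm⟩ := hmgu
  have hκsymm : {x | κ.symm x ≠ x}.Finite := by
    refine Set.Finite.subset (hκ.image κ) fun x hx => ?_
    simp only [Set.mem_setOf_eq] at hx
    refine ⟨κ.symm x, ?_, κ.apply_symm_apply x⟩
    show κ (κ.symm x) ≠ κ.symm x
    rw [κ.apply_symm_apply]
    exact fun hc => hx hc.symm
  refine ⟨finitary_comp_perm hf hκ, fun p hp => ?_, ?_⟩
  · rcases List.mem_singleton.mp hp with rfl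
    exact unifies_of_rename hv ht (hu (v', t') (List.mem_singleton_self _))
  · intro σ hσf hσu
    have hσ'f : Finitary (fun y => σ (κ.symm y)) := finitary_comp_perm hσf hκsymm
    have hσ'u : SUnifies (fun y => σ (κ.symm y)) [(v', t')] := by
      intro p hp
      rcases List.mem_singleton.mp hp with rfl
      show subst _ v' = subst _ t'
      rw [← hv, ← ht, Tm.subst_rename, Tm.subst_rename]
      simp only [Equiv.symm_apply_apply]
      exact hσu (v, t) (List.mem_singleton_self _)
    obtain ⟨ρ, hρf, hρ⟩ := hm _ hσ'f hσ'u
    refine ⟨ρ, hρf, fun x => ?_⟩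
    have := hρ (κ x)
    simpa using this

theorem merge_perms {A B A' B' : UFlow} (π π' : ℕ ≃ ℕ)
    (hA1 : rename π A.1 = A'.1) (hA2 : rename π A.2 = A'.2)
    (hB1 : rename π' B.1 = B'.1) (hB2 : rename π' B.2 = B'.2)
    (hd : ∀ x ∈ fvl A, x ∉ fvl B) (hd' : ∀ x ∈ fvl A', x ∉ fvl B') :
    ∃ κ : ℕ ≃ ℕ, {x | κ x ≠ x}.Finite ∧ rename κ A.1 = A'.1 ∧ rename κ A.2 = A'.2 ∧
      rename κ B.1 = B'.1 ∧ rename κ B.2 = B'.2 := by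
  classical
  set φ : ℕ → ℕ := fun x => if x ∈ fvl A then π x else π' x with hφdef
  have hφA : ∀ x ∈ fvl A, φ x = π x := fun x hx => by simp only [hφdef, if_pos hx]
  have hφB : ∀ x, x ∉ fvl A → φ x = π' x := fun x hx => by simp only [hφdef, if_neg hx]
  have hmemA : ∀ x ∈ fvl A, π x ∈ fvl A' := by
    intro x hx
    rcases List.mem_append.1 hx with hx | hx
    · exact List.mem_append.2 (Or.inl (by rw [← hA1]; exact Tm.mem_varsL_rename.2 ⟨x, hx, rfl⟩))
    · exact List.mem_append.2 (Or.inr (by rw [← hA2]; exact Tm.mem_varsL_rename.2 ⟨x, hx, rfl⟩))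
  have hmemB : ∀ x ∈ fvl B, π' x ∈ fvl B' := by
    intro x hx
    rcases List.mem_append.1 hx with hx | hx
    · exact List.mem_append.2 (Or.inl (by rw [← hB1]; exact Tm.mem_varsL_rename.2 ⟨x, hx, rfl⟩))
    · exact List.mem_append.2 (Or.inr (by rw [← hB2]; exact Tm.mem_varsL_rename.2 ⟨x, hx, rfl⟩))
  have hinj : ∀ x ∈ fvl A ++ fvl B, ∀ y ∈ fvl A ++ fvl B, φ x = φ y → x = y := by
    intro x hx y hy he
    by_cases hxA : x ∈ fvl A <;> by_cases hyA : y ∈ fvl A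
    · rw [hφA x hxA, hφA y hyA] at he
      exact π.injective he
    · have hyB : y ∈ fvl B := (List.mem_append.1 hy).resolve_left hyA
      rw [hφA x hxA, hφB y hyA] at he
      exact absurd (he ▸ hmemB y hyB) (hd' (π x) (hmemA x hxA))
    · have hxB : x ∈ fvl B := (List.mem_append.1 hx).resolve_left hxA
      rw [hφB x hxA, hφA y hyA] at he
      exact absurd (he ▸ hmemB x hxB) (hd' (π y) (hmemA y hyA))
    · have hxB : x ∈ fvl B := (List.mem_append.1 hx).resolve_left hxA
      have hyB : y ∈ fvl B := (List.mem_append.1 hy).resolve_left hyA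
      rw [hφB x hxA, hφB y hyA] at he
      exact π'.injective he
  obtain ⟨κ, hκ, hκfin⟩ := exists_perm_extend (fvl A ++ fvl B) φ hinj
  have hκA : ∀ x ∈ fvl A, κ x = π x := fun x hx => by
    rw [hκ x (List.mem_append.2 (Or.inl hx)), hφA x hx]
  have hκB : ∀ x ∈ fvl B, κ x = π' x := by
    intro x hx
    have hxA : x ∉ fvl A := fun hc => hd x hc hx
    rw [hκ x (List.mem_append.2 (Or.inr hx)), hφB x hxA]
  refine ⟨κ, hκfin, ?_, ?_, ?_, ?_⟩
  · rw [Tm.rename_congr fun x hx => hκA x (List.mem_append.2 (Or.inl hx)), hA1]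
  · rw [Tm.rename_congr fun x hx => hκA x (List.mem_append.2 (Or.inr hx)), hA2]
  · rw [Tm.rename_congr fun x hx => hκB x (List.mem_append.2 (Or.inl hx)), hB1]
  · rw [Tm.rename_congr fun x hx => hκB x (List.mem_append.2 (Or.inr hx)), hB2]
theorem foldr_max_le (l : List ℕ) : ∀ x ∈ l, x ≤ l.foldr max 0 := by
  induction l with
  | nil => simp
  | cons a l ih =>
    intro x hx
    rcases List.mem_cons.mp hx with rfl | hx
    · simp only [List.foldr_cons, le_max_iff]
      exact Or.inl le_rfl
    · simp only [List.foldr_cons, le_max_iff]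
      exact Or.inr (ih x hx)

theorem exists_disjoint_rep (f : UFlow) (S : List ℕ) :
    ∃ f' : UFlow, FlowEquiv f f' ∧ ∀ x ∈ fvl f', x ∉ S := by
  set N : ℕ := (S ++ fvl f).foldr max 0 + 1 with hN
  have hinj : ∀ x ∈ fvl f, ∀ y ∈ fvl f, x + N = y + N → x = y := by
    intro x _ y _ h
    omega
  obtain ⟨π, hπ, -⟩ := exists_perm_extend (fvl f) (· + N) hinj
  refine ⟨(rename π f.1, rename π f.2), ⟨π, rfl, rfl⟩, ?_⟩
  intro x hx hxS
  have hxle : x ≤ (S ++ fvl f).foldr max 0 :=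
    foldr_max_le _ x (List.mem_append.2 (Or.inl hxS))
  have : ∃ y ∈ fvl f, x = π y := by
    rcases List.mem_append.1 hx with h | h
    · rcases Tm.mem_varsL_rename.1 h with ⟨y, hy, rfl⟩
      exact ⟨y, List.mem_append.2 (Or.inl hy), rfl⟩
    · rcases Tm.mem_varsL_rename.1 h with ⟨y, hy, rfl⟩
      exact ⟨y, List.mem_append.2 (Or.inr hy), rfl⟩
  obtain ⟨y, hy, rfl⟩ := this
  rw [hπ y hy] at hxle
  have : y + N ≤ (S ++ fvl f).foldr max 0 := hxle
  omega

theorem isProd_of {f g : UFlow} {f' g' : UFlow} {θ : ℕ → Tm} (h1 : FlowEquiv f f')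
    (h2 : FlowEquiv g g') (hd : ∀ x ∈ fvl f', x ∉ fvl g') (hm : SMGU θ [(f'.2, g'.1)]) :
    IsProd f g (subst θ f'.1, subst θ g'.2) :=
  ⟨f', g', θ, h1, h2, flow_disj_iff.2 hd, isMGU_iff.2 hm, rfl⟩

theorem isProd_congr_left {f f' g h : UFlow} (e : FlowEquiv f f') (H : IsProd f g h) :
    IsProd f' g h := by
  obtain ⟨f₁, g₁, θ, e1, e2, hd, hm, rfl⟩ := H
  exact ⟨f₁, g₁, θ, e.symm.trans e1, e2, hd, hm, rfl⟩

theorem isProd_congr_mid {f g g' h : UFlow} (e : FlowEquiv g g') (H : IsProd f g h) :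
    IsProd f g' h := by
  obtain ⟨f₁, g₁, θ, e1, e2, hd, hm, rfl⟩ := H
  exact ⟨f₁, g₁, θ, e1, e.symm.trans e2, hd, hm, rfl⟩

theorem prod_uniq {f g p p' : UFlow} (H : IsProd f g p) (H' : IsProd f g p') :
    FlowEquiv p p' := by
  obtain ⟨f₁, g₁, θ₁, e1, e2, hd1, hm1, rfl⟩ := H
  obtain ⟨f₂, g₂, θ₂, e1', e2', hd2, hm2, rfl⟩ := H'
  obtain ⟨π, hπ1, hπ2⟩ := e1.symm.trans e1'
  obtain ⟨π', hπ'1, hπ'2⟩ := e2.symm.trans e2'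
  obtain ⟨κ, hκfin, hk1, hk2, hk3, hk4⟩ := merge_perms π π' hπ1 hπ2 hπ'1 hπ'2
    (flow_disj_iff.1 hd1) (flow_disj_iff.1 hd2)
  have hmgu2 : SMGU (fun x => θ₂ (κ x)) [(f₁.2, g₁.1)] :=
    smgu_of_rename hκfin hk2 hk3 (isMGU_iff.1 hm2)
  have he := smgu_flowEquiv (isMGU_iff.1 hm1) hmgu2 f₁.1 g₁.2
  have e1'' : subst (fun x => θ₂ (κ x)) f₁.1 = subst θ₂ f₂.1 := by
    rw [← Tm.subst_rename, hk1]
  have e2'' : subst (fun x => θ₂ (κ x)) g₁.2 = subst θ₂ g₂.2 := by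
    rw [← Tm.subst_rename, hk4]
  rwa [e1'', e2''] at he

theorem solvable_of_isProd {f g p : UFlow} (H : IsProd f g p) {f' g' : UFlow}
    (e1 : FlowEquiv f f') (e2 : FlowEquiv g g') (hd : ∀ x ∈ fvl f', x ∉ fvl g') :
    ∃ σ, Finitary σ ∧ Unifies σ f'.2 g'.1 := by
  obtain ⟨f₁, g₁, θ₁, e1', e2', hd1, hm1, rfl⟩ := H
  obtain ⟨π, hπ1, hπ2⟩ := e1.symm.trans e1'
  obtain ⟨π', hπ'1, hπ'2⟩ := e2.symm.trans e2'
  obtain ⟨κ, hκfin, hk1, hk2, hk3, hk4⟩ := merge_perms π π' hπ1 hπ2 hπ'1 hπ'2 hd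
    (flow_disj_iff.1 hd1)
  obtain ⟨hf, hu, -⟩ := isMGU_iff.1 hm1
  exact ⟨fun x => θ₁ (κ x), finitary_comp_perm hf hκfin,
    unifies_of_rename hk2 hk3 (hu _ (List.mem_singleton_self _))⟩

theorem sunifies_cons {σ : ℕ → Tm} {p : Tm × Tm} {E : List (Tm × Tm)} :
    SUnifies σ (p :: E) ↔ subst σ p.1 = subst σ p.2 ∧ SUnifies σ E := by
  constructor
  · intro h
    exact ⟨h p (List.mem_cons_self), fun q hq => h q (List.mem_cons_of_mem _ hq)⟩
  · rintro ⟨h1, h2⟩ q hq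
    rcases List.mem_cons.mp hq with rfl | hq
    · exact h1
    · exact h2 q hq

theorem sunifies_nil {σ : ℕ → Tm} : SUnifies σ [] := fun p hp => absurd hp List.not_mem_nil

theorem smgu_two_swap {a b c d : Tm} {θ : ℕ → Tm} (h : SMGU θ [(a, b), (c, d)]) :
    SMGU θ [(c, d), (a, b)] := by
  obtain ⟨h1, h2, h3⟩ := h
  rw [sunifies_cons, sunifies_cons] at h2
  refine ⟨h1, ?_, ?_⟩
  · rw [sunifies_cons, sunifies_cons]
    exact ⟨h2.2.1, h2.1, sunifies_nil⟩
  · intro σ hσf hσu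
    rw [sunifies_cons, sunifies_cons] at hσu
    refine h3 σ hσf ?_
    rw [sunifies_cons, sunifies_cons]
    exact ⟨hσu.2.1, hσu.1, sunifies_nil⟩

theorem subst_factor {σ ρ θ₁ : ℕ → Tm} (h : ∀ x, σ x = subst ρ (θ₁ x)) (c : Tm) :
    subst σ c = subst ρ (subst θ₁ c) := by
  rw [← subst_scomp]
  exact Tm.subst_congr fun y _ => h y

theorem smgu_compose {v t w t' : Tm} {θ₁ θ₂ : ℕ → Tm}
    (h1 : SMGU θ₁ [(v, t)]) (h2 : SMGU θ₂ [(subst θ₁ w, subst θ₁ t')]) :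
    SMGU (scomp θ₂ θ₁) [(v, t), (w, t')] := by
  obtain ⟨hf1, hu1, hm1⟩ := h1
  obtain ⟨hf2, hu2, hm2⟩ := h2
  have hu1' : subst θ₁ v = subst θ₁ t := hu1 _ (List.mem_singleton_self _)
  have hu2' : subst θ₂ (subst θ₁ w) = subst θ₂ (subst θ₁ t') :=
    hu2 _ (List.mem_singleton_self _)
  refine ⟨hf2.scomp hf1, ?_, ?_⟩
  · rw [sunifies_cons, sunifies_cons]
    refine ⟨?_, ?_, sunifies_nil⟩
    · show subst (scomp θ₂ θ₁) v = subst (scomp θ₂ θ₁) t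
      rw [subst_scomp, subst_scomp, hu1']
    · show subst (scomp θ₂ θ₁) w = subst (scomp θ₂ θ₁) t'
      rw [subst_scomp, subst_scomp, hu2']
  · intro σ hσf hσu
    rw [sunifies_cons, sunifies_cons] at hσu
    obtain ⟨hσ1, hσ2, -⟩ := hσu
    obtain ⟨ρ, hρf, hρ⟩ := hm1 σ hσf (by
      rw [sunifies_cons]
      exact ⟨hσ1, sunifies_nil⟩)
    have hρu : Unifies ρ (subst θ₁ w) (subst θ₁ t') := by
      show subst ρ (subst θ₁ w) = subst ρ (subst θ₁ t')
      rw [← subst_factor hρ w, ← subst_factor hρ t']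
      exact hσ2
    obtain ⟨ρ', hρ'f, hρ'⟩ := hm2 ρ hρf (by
      rw [sunifies_cons]
      exact ⟨hρu, sunifies_nil⟩)
    refine ⟨ρ', hρ'f, fun x => ?_⟩
    show σ x = subst ρ' (subst θ₂ (θ₁ x))
    rw [← subst_factor hρ' (θ₁ x)]
    exact hρ x

theorem solvable_second {v t w t' : Tm} {θ₁ : ℕ → Tm} (h1 : SMGU θ₁ [(v, t)])
    {σ : ℕ → Tm} (hσf : Finitary σ) (hσu : SUnifies σ [(v, t), (w, t')]) :
    ∃ ρ, Finitary ρ ∧ Unifies ρ (subst θ₁ w) (subst θ₁ t') := by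
  obtain ⟨hf1, hu1, hm1⟩ := h1
  rw [sunifies_cons, sunifies_cons] at hσu
  obtain ⟨hσ1, hσ2, -⟩ := hσu
  obtain ⟨ρ, hρf, hρ⟩ := hm1 σ hσf (by
    rw [sunifies_cons]
    exact ⟨hσ1, sunifies_nil⟩)
  refine ⟨ρ, hρf, ?_⟩
  show subst ρ (subst θ₁ w) = subst ρ (subst θ₁ t')
  rw [← subst_factor hρ w, ← subst_factor hρ t']
  exact hσ2
theorem mem_varsE_single {y : ℕ} {a b : Tm} :
    y ∈ varsE [(a, b)] ↔ y ∈ a.varsL ∨ y ∈ b.varsL := by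
  rw [mem_varsE_cons_iff]
  simp [varsE]

theorem prod_vars {θ : ℕ → Tm} {v t : Tm}
    (hI2 : ∀ x y, y ∈ (θ x).varsL → y ∈ varsE [(v, t)] ∨ y = x)
    {a : Tm} {y : ℕ} (hy : y ∈ (subst θ a).varsL) :
    y ∈ v.varsL ∨ y ∈ t.varsL ∨ y ∈ a.varsL := by
  rcases Tm.mem_varsL_subst.1 hy with ⟨x, hx, hyx⟩
  rcases hI2 x y hyx with h | rfl
  · rcases mem_varsE_single.1 h with h | h
    · exact Or.inl h
    · exact Or.inr (Or.inl h)
  · exact Or.inr (Or.inr hx)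

theorem subst_id_of_disjoint {θ : ℕ → Tm} {v t : Tm}
    (hI1 : ∀ x, θ x ≠ Tm.var x → x ∈ varsE [(v, t)]) {c : Tm}
    (hc : ∀ x ∈ c.varsL, x ∉ v.varsL ∧ x ∉ t.varsL) : subst θ c = c := by
  rw [Tm.subst_congr (τ := Tm.var) fun x hx => by
    by_contra hne
    rcases mem_varsE_single.1 (hI1 x hne) with h | h
    · exact (hc x hx).1 h
    · exact (hc x hx).2 h]
  exact Tm.subst_id c

theorem unifies_to_single {σ : ℕ → Tm} {a b : Tm} (h : Unifies σ a b) :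
    SUnifies σ [(a, b)] := sunifies_cons.2 ⟨h, sunifies_nil⟩

/-- From a left-associated pair of products, solve the whole system. -/
theorem sysA {f g h p q : UFlow} {g' h' : UFlow}
    (eg : FlowEquiv g g') (eh : FlowEquiv h h')
    (d_fg : ∀ x ∈ fvl f, x ∉ fvl g') (d_fh : ∀ x ∈ fvl f, x ∉ fvl h')
    (d_gh : ∀ x ∈ fvl g', x ∉ fvl h')
    (Hp : IsProd f g p) (Hq : IsProd p h q) :
    ∃ σ, Finitary σ ∧ SUnifies σ [(f.2, g'.1), (g'.2, h'.1)] := by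
  obtain ⟨σ₁, hσ₁f, hσ₁u⟩ := solvable_of_isProd Hp (FlowEquiv.refl f) eg d_fg
  obtain ⟨θ₁, hθ₁, hI1, hI2⟩ := exMGU [(f.2, g'.1)] ⟨σ₁, hσ₁f, unifies_to_single hσ₁u⟩
  set p₀ : UFlow := (subst θ₁ f.1, subst θ₁ g'.2) with hp₀
  have Hp₀ : IsProd f g p₀ := isProd_of (FlowEquiv.refl f) eg d_fg hθ₁
  have D1 : ∀ x ∈ fvl p₀, x ∉ fvl h' := by
    intro x hx
    rcases List.mem_append.1 hx with hm | hm
    · rcases prod_vars hI2 hm with h1 | h1 | h1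
      · exact d_fh x (List.mem_append.2 (Or.inr h1))
      · exact d_gh x (List.mem_append.2 (Or.inl h1))
      · exact d_fh x (List.mem_append.2 (Or.inl h1))
    · rcases prod_vars hI2 hm with h1 | h1 | h1
      · exact d_fh x (List.mem_append.2 (Or.inr h1))
      · exact d_gh x (List.mem_append.2 (Or.inl h1))
      · exact d_gh x (List.mem_append.2 (Or.inr h1))
  have Hq₀ : IsProd p₀ h q := isProd_congr_left (prod_uniq Hp Hp₀) Hq
  obtain ⟨σ₂, hσ₂f, hσ₂u⟩ := solvable_of_isProd Hq₀ (FlowEquiv.refl p₀) eh D1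
  have hid1 : subst θ₁ h'.1 = h'.1 := subst_id_of_disjoint hI1 fun x hx =>
    ⟨fun hc => d_fh x (List.mem_append.2 (Or.inr hc)) (List.mem_append.2 (Or.inl hx)),
     fun hc => d_gh x (List.mem_append.2 (Or.inl hc)) (List.mem_append.2 (Or.inl hx))⟩
  obtain ⟨hθ₁f, hθ₁u, -⟩ := hθ₁
  refine ⟨scomp σ₂ θ₁, hσ₂f.scomp hθ₁f, ?_⟩
  rw [sunifies_cons, sunifies_cons]
  refine ⟨?_, ?_, sunifies_nil⟩
  · show subst (scomp σ₂ θ₁) f.2 = subst (scomp σ₂ θ₁) g'.1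
    rw [subst_scomp, subst_scomp, hθ₁u _ (List.mem_singleton_self _)]
  · show subst (scomp σ₂ θ₁) g'.2 = subst (scomp σ₂ θ₁) h'.1
    rw [subst_scomp, subst_scomp, hid1]
    exact hσ₂u
/-- From a right-associated pair of products, solve the whole system. -/
theorem sysA' {f g h r s : UFlow} {g' h' : UFlow}
    (eg : FlowEquiv g g') (eh : FlowEquiv h h')
    (d_fg : ∀ x ∈ fvl f, x ∉ fvl g') (d_fh : ∀ x ∈ fvl f, x ∉ fvl h')
    (d_gh : ∀ x ∈ fvl g', x ∉ fvl h')
    (Hr : IsProd g h r) (Hs : IsProd f r s) :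
    ∃ σ, Finitary σ ∧ SUnifies σ [(f.2, g'.1), (g'.2, h'.1)] := by
  obtain ⟨σ₃, hσ₃f, hσ₃u⟩ := solvable_of_isProd Hr eg eh d_gh
  obtain ⟨θ₃, hθ₃, hI1, hI2⟩ := exMGU [(g'.2, h'.1)] ⟨σ₃, hσ₃f, unifies_to_single hσ₃u⟩
  set r₀ : UFlow := (subst θ₃ g'.1, subst θ₃ h'.2) with hr₀
  have Hr₀ : IsProd g h r₀ := isProd_of eg eh d_gh hθ₃
  have D2 : ∀ x ∈ fvl f, x ∉ fvl r₀ := by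
    intro x hx hc
    rcases List.mem_append.1 hc with hm | hm
    · rcases prod_vars hI2 hm with h1 | h1 | h1
      · exact d_fg x hx (List.mem_append.2 (Or.inr h1))
      · exact d_fh x hx (List.mem_append.2 (Or.inl h1))
      · exact d_fg x hx (List.mem_append.2 (Or.inl h1))
    · rcases prod_vars hI2 hm with h1 | h1 | h1
      · exact d_fg x hx (List.mem_append.2 (Or.inr h1))
      · exact d_fh x hx (List.mem_append.2 (Or.inl h1))
      · exact d_fh x hx (List.mem_append.2 (Or.inr h1))
  have Hs₀ : IsProd f r₀ s := isProd_congr_mid (prod_uniq Hr Hr₀) Hs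
  obtain ⟨σ₄, hσ₄f, hσ₄u⟩ := solvable_of_isProd Hs₀ (FlowEquiv.refl f) (FlowEquiv.refl r₀) D2
  have hid1 : subst θ₃ f.2 = f.2 := subst_id_of_disjoint hI1 fun x hx =>
    ⟨fun hc => d_fg x (List.mem_append.2 (Or.inr hx)) (List.mem_append.2 (Or.inr hc)),
     fun hc => d_fh x (List.mem_append.2 (Or.inr hx)) (List.mem_append.2 (Or.inl hc))⟩
  obtain ⟨hθ₃f, hθ₃u, -⟩ := hθ₃
  refine ⟨scomp σ₄ θ₃, hσ₄f.scomp hθ₃f, ?_⟩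
  rw [sunifies_cons, sunifies_cons]
  refine ⟨?_, ?_, sunifies_nil⟩
  · show subst (scomp σ₄ θ₃) f.2 = subst (scomp σ₄ θ₃) g'.1
    rw [subst_scomp, subst_scomp, hid1]
    exact hσ₄u
  · show subst (scomp σ₄ θ₃) g'.2 = subst (scomp σ₄ θ₃) h'.1
    rw [subst_scomp, subst_scomp, hθ₃u _ (List.mem_singleton_self _)]

/-- From solvability of the system, construct the left-associated products. -/
theorem sysB {f g h : UFlow} {g' h' : UFlow}
    (eg : FlowEquiv g g') (eh : FlowEquiv h h')
    (d_fg : ∀ x ∈ fvl f, x ∉ fvl g') (d_fh : ∀ x ∈ fvl f, x ∉ fvl h')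
    (d_gh : ∀ x ∈ fvl g', x ∉ fvl h')
    (hsol : ∃ σ, Finitary σ ∧ SUnifies σ [(f.2, g'.1), (g'.2, h'.1)]) :
    ∃ p₀ q₀ Θ, IsProd f g p₀ ∧ IsProd p₀ h q₀ ∧
      SMGU Θ [(f.2, g'.1), (g'.2, h'.1)] ∧ q₀ = (subst Θ f.1, subst Θ h'.2) := by
  obtain ⟨σ, hσf, hσu⟩ := hsol
  rw [sunifies_cons, sunifies_cons] at hσu
  obtain ⟨hσ1, hσ2, -⟩ := hσu
  obtain ⟨θ₁, hθ₁, hI1, hI2⟩ := exMGU [(f.2, g'.1)] ⟨σ, hσf, unifies_to_single hσ1⟩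
  set p₀ : UFlow := (subst θ₁ f.1, subst θ₁ g'.2) with hp₀
  have Hp₀ : IsProd f g p₀ := isProd_of (FlowEquiv.refl f) eg d_fg hθ₁
  have D1 : ∀ x ∈ fvl p₀, x ∉ fvl h' := by
    intro x hx
    rcases List.mem_append.1 hx with hm | hm
    · rcases prod_vars hI2 hm with h1 | h1 | h1
      · exact d_fh x (List.mem_append.2 (Or.inr h1))
      · exact d_gh x (List.mem_append.2 (Or.inl h1))
      · exact d_fh x (List.mem_append.2 (Or.inl h1))
    · rcases prod_vars hI2 hm with h1 | h1 | h1
      · exact d_fh x (List.mem_append.2 (Or.inr h1))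
      · exact d_gh x (List.mem_append.2 (Or.inl h1))
      · exact d_gh x (List.mem_append.2 (Or.inr h1))
  have hid1 : subst θ₁ h'.1 = h'.1 := subst_id_of_disjoint hI1 fun x hx =>
    ⟨fun hc => d_fh x (List.mem_append.2 (Or.inr hc)) (List.mem_append.2 (Or.inl hx)),
     fun hc => d_gh x (List.mem_append.2 (Or.inl hc)) (List.mem_append.2 (Or.inl hx))⟩
  have hid2 : subst θ₁ h'.2 = h'.2 := subst_id_of_disjoint hI1 fun x hx =>
    ⟨fun hc => d_fh x (List.mem_append.2 (Or.inr hc)) (List.mem_append.2 (Or.inr hx)),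
     fun hc => d_gh x (List.mem_append.2 (Or.inl hc)) (List.mem_append.2 (Or.inr hx))⟩
  have hsol2 : ∃ ρ, Finitary ρ ∧ Unifies ρ (subst θ₁ g'.2) h'.1 := by
    obtain ⟨ρ, hρf, hρu⟩ := solvable_second hθ₁ hσf (by
      rw [sunifies_cons, sunifies_cons]
      exact ⟨hσ1, hσ2, sunifies_nil⟩)
    rw [hid1] at hρu
    exact ⟨ρ, hρf, hρu⟩
  obtain ⟨ρ, hρf, hρu⟩ := hsol2
  obtain ⟨θ₂, hθ₂, hJ1, hJ2⟩ := exMGU [(subst θ₁ g'.2, h'.1)] ⟨ρ, hρf, unifies_to_single hρu⟩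
  have Hq₀ : IsProd p₀ h (subst θ₂ p₀.1, subst θ₂ h'.2) :=
    isProd_of (FlowEquiv.refl p₀) eh D1 hθ₂
  refine ⟨p₀, (subst θ₂ p₀.1, subst θ₂ h'.2), scomp θ₂ θ₁, Hp₀, Hq₀, ?_, ?_⟩
  · refine smgu_compose hθ₁ ?_
    rw [hid1]
    exact hθ₂
  · have e1 : subst θ₂ p₀.1 = subst (scomp θ₂ θ₁) f.1 := by
      rw [subst_scomp]
    have e2 : subst θ₂ h'.2 = subst (scomp θ₂ θ₁) h'.2 := by
      rw [subst_scomp, hid2]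
    rw [e1, e2]

/-- From solvability of the system, construct the right-associated products. -/
theorem sysB' {f g h : UFlow} {g' h' : UFlow}
    (eg : FlowEquiv g g') (eh : FlowEquiv h h')
    (d_fg : ∀ x ∈ fvl f, x ∉ fvl g') (d_fh : ∀ x ∈ fvl f, x ∉ fvl h')
    (d_gh : ∀ x ∈ fvl g', x ∉ fvl h')
    (hsol : ∃ σ, Finitary σ ∧ SUnifies σ [(f.2, g'.1), (g'.2, h'.1)]) :
    ∃ r₀ s₀ Θ', IsProd g h r₀ ∧ IsProd f r₀ s₀ ∧
      SMGU Θ' [(f.2, g'.1), (g'.2, h'.1)] ∧ s₀ = (subst Θ' f.1, subst Θ' h'.2) := by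
  obtain ⟨σ, hσf, hσu⟩ := hsol
  rw [sunifies_cons, sunifies_cons] at hσu
  obtain ⟨hσ1, hσ2, -⟩ := hσu
  obtain ⟨θ₃, hθ₃, hI1, hI2⟩ := exMGU [(g'.2, h'.1)] ⟨σ, hσf, unifies_to_single hσ2⟩
  set r₀ : UFlow := (subst θ₃ g'.1, subst θ₃ h'.2) with hr₀
  have Hr₀ : IsProd g h r₀ := isProd_of eg eh d_gh hθ₃
  have D2 : ∀ x ∈ fvl f, x ∉ fvl r₀ := by
    intro x hx hc
    rcases List.mem_append.1 hc with hm | hm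
    · rcases prod_vars hI2 hm with h1 | h1 | h1
      · exact d_fg x hx (List.mem_append.2 (Or.inr h1))
      · exact d_fh x hx (List.mem_append.2 (Or.inl h1))
      · exact d_fg x hx (List.mem_append.2 (Or.inl h1))
    · rcases prod_vars hI2 hm with h1 | h1 | h1
      · exact d_fg x hx (List.mem_append.2 (Or.inr h1))
      · exact d_fh x hx (List.mem_append.2 (Or.inl h1))
      · exact d_fh x hx (List.mem_append.2 (Or.inr h1))
  have hid1 : subst θ₃ f.2 = f.2 := subst_id_of_disjoint hI1 fun x hx =>
    ⟨fun hc => d_fg x (List.mem_append.2 (Or.inr hx)) (List.mem_append.2 (Or.inr hc)),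
     fun hc => d_fh x (List.mem_append.2 (Or.inr hx)) (List.mem_append.2 (Or.inl hc))⟩
  have hid0 : subst θ₃ f.1 = f.1 := subst_id_of_disjoint hI1 fun x hx =>
    ⟨fun hc => d_fg x (List.mem_append.2 (Or.inl hx)) (List.mem_append.2 (Or.inr hc)),
     fun hc => d_fh x (List.mem_append.2 (Or.inl hx)) (List.mem_append.2 (Or.inl hc))⟩
  have hsol2 : ∃ ρ, Finitary ρ ∧ Unifies ρ f.2 (subst θ₃ g'.1) := by
    obtain ⟨ρ, hρf, hρu⟩ := solvable_second hθ₃ hσf (by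
      rw [sunifies_cons, sunifies_cons]
      exact ⟨hσ2, hσ1, sunifies_nil⟩)
    rw [hid1] at hρu
    exact ⟨ρ, hρf, hρu⟩
  obtain ⟨ρ, hρf, hρu⟩ := hsol2
  obtain ⟨θ₄, hθ₄, hJ1, hJ2⟩ := exMGU [(f.2, subst θ₃ g'.1)] ⟨ρ, hρf, unifies_to_single hρu⟩
  have Hs₀ : IsProd f r₀ (subst θ₄ f.1, subst θ₄ r₀.2) :=
    isProd_of (FlowEquiv.refl f) (FlowEquiv.refl r₀) D2 hθ₄
  refine ⟨r₀, (subst θ₄ f.1, subst θ₄ r₀.2), scomp θ₄ θ₃, Hr₀, Hs₀, ?_, ?_⟩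
  · refine smgu_two_swap (smgu_compose hθ₃ ?_)
    rw [hid1]
    exact hθ₄
  · have e1 : subst θ₄ f.1 = subst (scomp θ₄ θ₃) f.1 := by
      rw [subst_scomp, hid0]
    have e2 : subst θ₄ r₀.2 = subst (scomp θ₄ θ₃) h'.2 := by
      rw [subst_scomp]
    rw [e1, e2]
/-- associativity of the product of flows where defined:
`(fg)h` is defined iff `f(gh)` is defined, and when defined they are equal
(up to renaming, as flows are considered up to renaming). -/
theorem prod_assoc (f g h : UFlow) (hf : IsFlow f) (hg : IsFlow g) (hh : IsFlow h) :
    ((∃ p, IsProd f g p ∧ ∃ q, IsProd p h q) ↔ (∃ r, IsProd g h r ∧ ∃ s, IsProd f r s)) ∧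
    (∀ p q r s, IsProd f g p → IsProd p h q → IsProd g h r → IsProd f r s →
      FlowEquiv q s) := by
  obtain ⟨g', eg, hg'⟩ := exists_disjoint_rep g (fvl f)
  obtain ⟨h', eh, hh'⟩ := exists_disjoint_rep h (fvl f ++ fvl g')
  have d_fg : ∀ x ∈ fvl f, x ∉ fvl g' := fun x hx hc => hg' x hc hx
  have d_fh : ∀ x ∈ fvl f, x ∉ fvl h' := fun x hx hc =>
    hh' x hc (List.mem_append.2 (Or.inl hx))
  have d_gh : ∀ x ∈ fvl g', x ∉ fvl h' := fun x hx hc =>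
    hh' x hc (List.mem_append.2 (Or.inr hx))
  constructor
  · constructor
    · rintro ⟨p, Hp, q, Hq⟩
      obtain ⟨r₀, s₀, Θ', Hr₀, Hs₀, -, -⟩ := sysB' eg eh d_fg d_fh d_gh
        (sysA eg eh d_fg d_fh d_gh Hp Hq)
      exact ⟨r₀, Hr₀, s₀, Hs₀⟩
    · rintro ⟨r, Hr, s, Hs⟩
      obtain ⟨p₀, q₀, Θ, Hp₀, Hq₀, -, -⟩ := sysB eg eh d_fg d_fh d_gh
        (sysA' eg eh d_fg d_fh d_gh Hr Hs)
      exact ⟨p₀, Hp₀, q₀, Hq₀⟩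
  · intro p q r s Hp Hq Hr Hs
    have hsol := sysA eg eh d_fg d_fh d_gh Hp Hq
    obtain ⟨p₀, q₀, Θ, Hp₀, Hq₀, hΘ, hq₀⟩ := sysB eg eh d_fg d_fh d_gh hsol
    obtain ⟨r₀, s₀, Θ', Hr₀, Hs₀, hΘ', hs₀⟩ := sysB' eg eh d_fg d_fh d_gh hsol
    have hqq₀ : FlowEquiv q q₀ :=
      prod_uniq (isProd_congr_left (prod_uniq Hp Hp₀) Hq) Hq₀
    have hss₀ : FlowEquiv s s₀ :=
      prod_uniq (isProd_congr_mid (prod_uniq Hr Hr₀) Hs) Hs₀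
    have hq₀s₀ : FlowEquiv q₀ s₀ := by
      rw [hq₀, hs₀]
      exact smgu_flowEquiv hΘ hΘ' f.1 h'.2
    exact (hqq₀.trans hq₀s₀).trans hss₀.symm
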